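/- arXiv:2003.01430 — 4 statements merged into one kernel-verified Lean document; each statement's English description precedes it below -/
import Mathlib

section
/- Let a, b > 0 with 0 < ε < 1, and suppose â, b̂ > 0 satisfy (1-ε)a ≤ â ≤ (1+ε)a and (1-ε)b ≤ b̂ ≤ (1+ε)b. Then ŝ = (b̂ - â)/max(â, b̂) satisfies ŝ ≤ s + 4ε/(1-ε), where s = (b - a)/max(a, b). -/
theorem silhouette_upper_bound (a b ah bh ε : ℝ) (ha : 0 < a) (hb : 0 < b)
    (hah : 0 < ah) (hbh : 0 < bh) (hε : 0 < ε) (hε1 : ε < 1)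
    (ha1 : (1 - ε) * a ≤ ah) (ha2 : ah ≤ (1 + ε) * a)
    (hb1 : (1 - ε) * b ≤ bh) (hb2 : bh ≤ (1 + ε) * b) :
    (bh - ah) / max ah bh ≤ (b - a) / max a b + 4 * ε / (1 - ε) := by
  have hε' : 0 < 1 - ε := by linarith
  have h1 : bh - ah ≤ (b - a) + ε * (a + b) := by nlinarith
  rcases le_total a b with hab | hab <;> rcases le_total ah bh with habh | habh <;>
      simp only [max_eq_right, max_eq_left, habh, hab] <;>
      rw [div_add_div _ _ (by positivity) (by linarith),
        div_le_div_iff₀ (by positivity) (by positivity)]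
  · -- a ≤ b, ah ≤ bh : denominators b and bh
    nlinarith [mul_le_mul_of_nonneg_right h1 (by positivity : (0:ℝ) ≤ b * (1 - ε)),
      mul_nonneg (by nlinarith : (0:ℝ) ≤ (b - a) * (1 - ε) + b * (4 * ε))
        (by linarith : (0:ℝ) ≤ bh - (1 - ε) * b),
      mul_pos hε hb, mul_pos hε ha]
  · -- a ≤ b, bh ≤ ah : LHS ≤ 0 ≤ RHS
    nlinarith [mul_nonneg (by linarith : (0:ℝ) ≤ ah - bh) (by positivity : (0:ℝ) ≤ b * (1 - ε)),
      mul_nonneg (by nlinarith : (0:ℝ) ≤ (b - a) * (1 - ε) + b * (4 * ε)) hah.le]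
  · -- b ≤ a, ah ≤ bh
    have hba : a - b ≤ ε * (a + b) := by nlinarith
    have hN : (0:ℝ) ≤ (b - a) * (1 - ε) + a * (4 * ε) := by nlinarith
    nlinarith [mul_le_mul_of_nonneg_right h1 (by positivity : (0:ℝ) ≤ a * (1 - ε)),
      mul_nonneg hN (by linarith : (0:ℝ) ≤ bh - (1 - ε) * a),
      mul_nonneg (mul_nonneg hε.le (by linarith : (0:ℝ) ≤ a - b)) (by positivity : (0:ℝ) ≤ a * (1 - ε)),
      mul_nonneg (mul_nonneg hε.le ha.le) (by positivity : (0:ℝ) ≤ a * (1 - ε)),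
      mul_pos hε ha, mul_pos hε hb]
  · -- b ≤ a, bh ≤ ah
    nlinarith [mul_le_mul_of_nonneg_right h1 (by positivity : (0:ℝ) ≤ a * (1 - ε)),
      mul_nonneg (mul_nonneg (by linarith : (0:ℝ) ≤ a - b) hε'.le)
        (by linarith : (0:ℝ) ≤ (1 + ε) * a - ah),
      mul_nonneg (by positivity : (0:ℝ) ≤ 4 * ε * a) (by linarith : (0:ℝ) ≤ ah - (1 - ε) * a)]
end

section
/- Let a, b > 0 with 0 < ε < 1, and suppose â, b̂ > 0 satisfy (1-ε)a ≤ â ≤ (1+ε)a and (1-ε)b ≤ b̂ ≤ (1+ε)b. Then ŝ = (b̂ - â)/max(â, b̂) satisfies ŝ ≥ s - 4ε/(1-ε), where s = (b - a)/max(a, b). -/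
theorem silhouette_lower_bound (a b ah bh ε : ℝ) (ha : 0 < a) (hb : 0 < b)
    (hah : 0 < ah) (hbh : 0 < bh) (hε : 0 < ε) (hε1 : ε < 1)
    (ha1 : (1 - ε) * a ≤ ah) (ha2 : ah ≤ (1 + ε) * a)
    (hb1 : (1 - ε) * b ≤ bh) (hb2 : bh ≤ (1 + ε) * b) :
    (bh - ah) / max ah bh ≥ (b - a) / max a b - 4 * ε / (1 - ε) := by
  have h1 : 0 < 1 - ε := by linarith
  rcases le_total a b with hab | hab <;> rcases le_total ah bh with hab' | hab' <;>
    [rw [max_eq_right hab, max_eq_right hab']; rw [max_eq_right hab, max_eq_left hab'];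
     rw [max_eq_left hab, max_eq_right hab']; rw [max_eq_left hab, max_eq_left hab']] <;>
    rw [ge_iff_le, div_sub_div _ _ (by positivity) h1.ne',
      div_le_div_iff₀ (by positivity) (by positivity)]
  · nlinarith [mul_nonneg (mul_nonneg h1.le hb.le) (sub_nonneg.2 ha2),
      mul_nonneg (mul_nonneg (mul_nonneg h1.le ha.le) (sub_nonneg.2 hb1)) h1.le,
      mul_nonneg (mul_nonneg (mul_nonneg hε.le hb.le) (sub_nonneg.2 hb1)) h1.le,
      mul_nonneg (mul_nonneg (mul_nonneg hε.le h1.le) (sub_nonneg.2 hab)) hb.le]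
  · nlinarith [mul_nonneg (mul_nonneg h1.le hb.le) (sub_nonneg.2 ha2),
      mul_nonneg (mul_nonneg hε.le hah.le) (sub_nonneg.2 hb1),
      mul_nonneg (mul_nonneg h1.le hah.le) (sub_nonneg.2 hb1),
      mul_nonneg (mul_nonneg hε.le hb.le) (sub_nonneg.2 hab'),
      mul_nonneg (sub_nonneg.2 hb1) (sub_nonneg.2 hab'),
      mul_nonneg (mul_nonneg hε.le ha.le) (sub_nonneg.2 hab'),
      mul_nonneg (mul_nonneg h1.le (sub_nonneg.2 hab)) hah.le,
      mul_nonneg (mul_nonneg hε.le (sub_nonneg.2 hab)) hah.le]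
  · nlinarith [mul_pos ha hb, mul_pos hε hb, mul_pos hε ha, mul_pos hah hbh,
      mul_pos (mul_pos hε ha) hb, mul_pos (mul_pos (mul_pos hε hε) ha) hb]
  · nlinarith [mul_pos ha hb, mul_pos hε hb, mul_pos hε ha, mul_pos hah hbh,
      mul_pos (mul_pos hε ha) hb, mul_pos (mul_pos (mul_pos hε hε) ha) hb]
end

section
/- Let a, b > 0 with 0 < ε < 1, and suppose â, b̂ > 0 satisfy (1-ε)a ≤ â ≤ (1+ε)a and (1-ε)b ≤ b̂ ≤ (1+ε)b. Then |(b̂-â)/max(â,b̂) - (b-a)/max(a,b)| ≤ 4ε/(1-ε). -/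
theorem silhouette_additive_error (a b ah bh ε : ℝ) (ha : 0 < a) (hb : 0 < b)
    (hah : 0 < ah) (hbh : 0 < bh) (hε : 0 < ε) (hε1 : ε < 1)
    (ha1 : (1 - ε) * a ≤ ah) (ha2 : ah ≤ (1 + ε) * a)
    (hb1 : (1 - ε) * b ≤ bh) (hb2 : bh ≤ (1 + ε) * b) :
    |(bh - ah) / max ah bh - (b - a) / max a b| ≤ 4 * ε / (1 - ε) := by
  set M := max a b with hMdef
  set Mh := max ah bh with hMhdef
  have hM : 0 < M := lt_max_of_lt_left ha
  have hMh : 0 < Mh := lt_max_of_lt_left hah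
  have haM : a ≤ M := le_max_left _ _
  have hbM : b ≤ M := le_max_right _ _
  have hMh_ub : Mh ≤ (1 + ε) * M := by
    apply max_le
    · exact ha2.trans (by nlinarith)
    · exact hb2.trans (by nlinarith)
  have hMh_lb : (1 - ε) * M ≤ Mh := by
    rcases max_cases a b with ⟨h1, h2⟩ | ⟨h1, h2⟩
    · rw [hMdef, h1]; exact ha1.trans (le_max_left _ _)
    · rw [hMdef, h1]; exact hb1.trans (le_max_right _ _)
  have hXY : |(bh - ah) - (b - a)| ≤ 2 * ε * M := by
    rw [abs_le]; constructor <;> nlinarith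
  have hY : |b - a| ≤ M := by
    rw [abs_le]; constructor <;> nlinarith [le_max_left a b, le_max_right a b]
  have hMM : |M - Mh| ≤ ε * M := by
    rw [abs_le]; constructor <;> nlinarith
  have hε' : 0 < 1 - ε := by linarith
  rw [div_sub_div _ _ hMh.ne' hM.ne', abs_div, abs_of_pos (mul_pos hMh hM),
    div_le_div_iff₀ (mul_pos hMh hM) hε']
  have hnum : |(bh - ah) * M - (b - a) * Mh| ≤ 3 * ε * M ^ 2 := by
    have : (bh - ah) * M - (b - a) * Mh
        = ((bh - ah) - (b - a)) * M + (b - a) * (M - Mh) := by ring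
    rw [this]
    calc |((bh - ah) - (b - a)) * M + (b - a) * (M - Mh)|
        ≤ |((bh - ah) - (b - a)) * M| + |(b - a) * (M - Mh)| := abs_add_le _ _
      _ = |(bh - ah) - (b - a)| * |M| + |b - a| * |M - Mh| := by
          rw [abs_mul, abs_mul]
      _ ≤ (2 * ε * M) * M + M * (ε * M) := by
          rw [abs_of_pos hM]
          gcongr <;> positivity
      _ = 3 * ε * M ^ 2 := by ring
  rw [mul_comm Mh (b - a)]
  nlinarith [mul_le_mul_of_nonneg_right hnum hε'.le, abs_nonneg ((bh - ah) * M - (b - a) * Mh), mul_pos hM hMh,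
    mul_le_mul_of_nonneg_left hMh_lb (le_of_lt (mul_pos hε hM))]
end

section
/- Let C be a finite set with |C| ≥ 2 in a metric space, and for e ∈ C define m(e) as the median of the distances from e to the other elements of C. Call e well positioned if m(e) ≤ 2·min_{e' ∈ C} m(e'). Then at least half of the elements of C are well positioned. -/
/-- The median of the distances from `e` to the other elements of `C`:
the `⌈(|C|-1)/2⌉`-th smallest of these distances. -/
noncomputable def medianDist {α : Type*} [MetricSpace α] [DecidableEq α] (C : Finset α) (e : α) : ℝ :=
  (((C.erase e).val.map (dist e)).sort (· ≤ ·)).getD (((C.card - 1) + 1) / 2 - 1) 0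

/-- `e` is well positioned in `C` if its median distance is at most twice the
minimum median distance over all elements of `C`. -/
noncomputable def wellPositioned {α : Type*} [MetricSpace α] [DecidableEq α]
    (C : Finset α) (hC : C.Nonempty) (e : α) : Prop :=
  medianDist C e ≤ 2 * C.inf' hC (medianDist C)


open List in
lemma sorted_countP_le (l : List ℝ) (hs : l.Pairwise (· ≤ ·)) (i : ℕ) (hi : i < l.length) :
    i + 1 ≤ l.countP (fun x => decide (x ≤ l[i])) := by
  have h2 : (l.take (i+1)).countP (fun x => decide (x ≤ l[i])) = (l.take (i+1)).length := by
    rw [countP_eq_length]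
    intro a ha
    obtain ⟨j, hj, rfl⟩ := getElem_of_mem ha
    have hji : j ≤ i := by simp [length_take] at hj; omega
    rw [getElem_take]
    simp only [decide_eq_true_eq]
    exact hs.rel_get_of_le (a := ⟨j, by omega⟩) (b := ⟨i, hi⟩) (by simpa using hji)
  calc i + 1 = (l.take (i+1)).length := by simp [length_take]; omega
    _ = (l.take (i+1)).countP _ := h2.symm
    _ ≤ l.countP (fun x => decide (x ≤ l[i])) := (take_sublist _ _).countP_le

open List in
lemma sorted_getElem_le (l : List ℝ) (hs : l.Pairwise (· ≤ ·)) (i : ℕ) (hi : i < l.length)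
    (b : ℝ) (h : i + 1 ≤ l.countP (fun x => decide (x ≤ b))) : l[i] ≤ b := by
  by_contra hb
  push_neg at hb
  have h1 : l = l.take i ++ l.drop i := (take_append_drop _ _).symm
  have h2 : (l.drop i).countP (fun x => decide (x ≤ b)) = 0 := by
    rw [countP_eq_zero]
    intro a ha
    obtain ⟨j, hj, rfl⟩ := getElem_of_mem ha
    rw [getElem_drop]
    simp only [decide_eq_true_eq, not_le]
    refine lt_of_lt_of_le hb ?_
    have := hs.rel_get_of_le (a := ⟨i, hi⟩) (b := ⟨i + j, by simp [length_drop] at hj; omega⟩)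
      (by simp)
    simpa using this
  have h3 : (l.take i).countP (fun x => decide (x ≤ b)) ≤ i := by
    refine le_trans countP_le_length ?_
    simp [length_take]
  rw [h1, countP_append, h2] at h
  omega

lemma countP_sort_eq {α : Type*} [MetricSpace α] [DecidableEq α] (C : Finset α) (e : α) (b : ℝ) :
    (((C.erase e).val.map (dist e)).sort (· ≤ ·)).countP (fun x => decide (x ≤ b))
      = ((C.erase e).filter (fun x => dist e x ≤ b)).card := by
  rw [← Multiset.coe_countP, Multiset.sort_eq, Multiset.countP_map]
  rfl

section aux
variable {α : Type*} [MetricSpace α] [DecidableEq α]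

lemma length_sortlist (C : Finset α) {e : α} (he : e ∈ C) :
    (((C.erase e).val.map (dist e)).sort (· ≤ ·)).length = C.card - 1 := by
  rw [Multiset.length_sort, Multiset.card_map]
  exact Finset.card_erase_of_mem he

omit [MetricSpace α] [DecidableEq α] in
lemma k_lt (C : Finset α) (h2 : 2 ≤ C.card) :
    ((C.card - 1) + 1) / 2 - 1 < C.card - 1 := by omega

lemma medianDist_eq_getElem (C : Finset α) (h2 : 2 ≤ C.card) {e : α} (he : e ∈ C) :
    medianDist C e = (((C.erase e).val.map (dist e)).sort (· ≤ ·))[((C.card - 1) + 1) / 2 - 1]'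
      (by rw [length_sortlist C he]; exact k_lt C h2) := by
  exact List.getD_eq_getElem _ _ _

lemma medianDist_nonneg (C : Finset α) (h2 : 2 ≤ C.card) {e : α} (he : e ∈ C) :
    0 ≤ medianDist C e := by
  rw [medianDist_eq_getElem C h2 he]
  have hmem := List.getElem_mem (l := ((C.erase e).val.map (dist e)).sort (· ≤ ·))
    (by rw [length_sortlist C he]; exact k_lt C h2 : ((C.card - 1) + 1) / 2 - 1 < _)
  rw [Multiset.mem_sort, Multiset.mem_map] at hmem
  obtain ⟨a, -, ha⟩ := hmem
  rw [← ha]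
  exact dist_nonneg

lemma count_le_of_median (C : Finset α) (h2 : 2 ≤ C.card) {e : α} (he : e ∈ C) :
    ((C.card - 1) + 1) / 2 ≤ ((C.erase e).filter (fun x => dist e x ≤ medianDist C e)).card := by
  rw [← countP_sort_eq]
  have hi : ((C.card - 1) + 1) / 2 - 1 < (((C.erase e).val.map (dist e)).sort (· ≤ ·)).length := by
    rw [length_sortlist C he]; exact k_lt C h2
  have := sorted_countP_le _ (Multiset.pairwise_sort _ _) _ hi
  rw [← medianDist_eq_getElem C h2 he] at this
  omega

lemma median_le_of_count (C : Finset α) (h2 : 2 ≤ C.card) {e : α} (he : e ∈ C) (b : ℝ)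
    (hb : ((C.card - 1) + 1) / 2 ≤ ((C.erase e).filter (fun x => dist e x ≤ b)).card) :
    medianDist C e ≤ b := by
  rw [medianDist_eq_getElem C h2 he]
  refine sorted_getElem_le _ (Multiset.pairwise_sort _ _) _ _ b ?_
  rw [countP_sort_eq]
  omega

end aux

theorem half_well_positioned {α : Type*} [MetricSpace α] [DecidableEq α]
    (C : Finset α) (h2 : 2 ≤ C.card) (hC : C.Nonempty) :
    C.card ≤ 2 * (C.filter (fun e => medianDist C e ≤ 2 * C.inf' hC (medianDist C))).card := by
  obtain ⟨es, hes, hmin⟩ := C.exists_mem_eq_inf' hC (medianDist C)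
  set m := medianDist C es with hm
  set S := (C.erase es).filter (fun x => dist es x ≤ m) with hSdef
  have hS : ((C.card - 1) + 1) / 2 ≤ S.card := count_le_of_median C h2 hes
  have hmnn : 0 ≤ m := medianDist_nonneg C h2 hes
  have hesS : es ∉ S := fun h => (Finset.mem_erase.1 (Finset.mem_filter.1 h).1).1 rfl
  -- every element of S is well positioned
  have hSW : ∀ e ∈ S, medianDist C e ≤ 2 * C.inf' hC (medianDist C) := by
    intro e heS
    rw [hmin]
    obtain ⟨heC', hde⟩ := Finset.mem_filter.1 heS
    obtain ⟨hne, heC⟩ := Finset.mem_erase.1 heC'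
    refine median_le_of_count C h2 heC (2 * m) ?_
    have hsub : insert es (S.erase e) ⊆ (C.erase e).filter (fun x => dist e x ≤ 2 * m) := by
      intro x hx
      rcases Finset.mem_insert.1 hx with rfl | hx
      · refine Finset.mem_filter.2 ⟨Finset.mem_erase.2 ⟨Ne.symm hne, hes⟩, ?_⟩
        rw [dist_comm]
        linarith
      · obtain ⟨hxe, hxS⟩ := Finset.mem_erase.1 hx
        obtain ⟨hxC', hdx⟩ := Finset.mem_filter.1 hxS
        refine Finset.mem_filter.2 ⟨Finset.mem_erase.2 ⟨hxe, (Finset.mem_erase.1 hxC').2⟩, ?_⟩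
        calc dist e x ≤ dist e es + dist es x := dist_triangle _ _ _
          _ ≤ m + m := by rw [dist_comm]; exact add_le_add hde hdx
          _ = 2 * m := by ring
    have hcard : S.card ≤ (insert es (S.erase e)).card := by
      rw [Finset.card_insert_of_notMem (fun h => hesS (Finset.mem_of_mem_erase h)),
        Finset.card_erase_of_mem heS]
      have : 1 ≤ S.card := Finset.card_pos.2 ⟨e, heS⟩
      omega
    calc ((C.card - 1) + 1) / 2 ≤ S.card := hS
      _ ≤ (insert es (S.erase e)).card := hcard
      _ ≤ _ := Finset.card_le_card hsub
  have hsub2 : insert es S ⊆ C.filter (fun e => medianDist C e ≤ 2 * C.inf' hC (medianDist C)) := by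
    intro x hx
    rcases Finset.mem_insert.1 hx with rfl | hx
    · exact Finset.mem_filter.2 ⟨hes, by rw [hmin]; linarith⟩
    · exact Finset.mem_filter.2 ⟨(Finset.mem_erase.1 (Finset.mem_filter.1 hx).1).2, hSW x hx⟩
  have hfinal := Finset.card_le_card hsub2
  rw [Finset.card_insert_of_notMem hesS] at hfinal
  omega
end
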